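/- arXiv:1801.02713 — 2 statements merged into one kernel-verified Lean document; each statement's English description precedes it below -/
import Mathlib

section
/- Let F be a field, let m ≥ 1 and N ≥ 0 be integers, let c : ℕ → F be a sequence of inputs, and let S : ℕ → Fin m → F be the circular shift-register state for c. Assume the tail-biting termination condition: for every residue class r modulo m, Σ_{i : 1 ≤ i ≤ N, i ≡ r (mod m)} c i = 0. Then for every 0 ≤ k ≤ N and every register index 0 ≤ j ≤ m−1, the forward state satisfies S k j = − Σ_{i : k < i ≤ N, i ≡ k − j (mod m)} c i; that is, the state reached by the forward encoder after inputs c₁,…,c_k coincides with the state computed by the backward (reverse-memory-labeled, time-reversed) encoder from the remaining inputs c_N,…,c_{k+1}. -/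
open Finset

/-- The circular shift-register state for inputs `c : ℕ → F` (indices starting at 1) and
`m` registers: `S 0 j = 0`, `S k 0 = c k + S (k−1) (m−1)` for `k ≥ 1`, and
`S k j = S (k−1) (j−1)` for `k ≥ 1`, `1 ≤ j ≤ m−1`.  (In `Fin m`, `0 - 1 = m - 1`, so the
single equation below covers both cases.) -/
def shiftState {F : Type*} [Field F] (m : ℕ) [NeZero m] (c : ℕ → F) :
    ℕ → Fin m → F
  | 0, _ => 0
  | (k + 1), j =>
      if j = 0 then c (k + 1) + shiftState m c k (j - 1)
      else shiftState m c k (j - 1)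

lemma fin_sub_one_cast (m : ℕ) [NeZero m] (j : Fin m) :
    (((j - 1 : Fin m).val : ℕ) : ZMod m) = (j.val : ZMod m) - 1 := by
  rw [Fin.sub_def]
  show ((((m - (1:Fin m).val + j.val) % m : ℕ)) : ZMod m) = _
  rw [ZMod.natCast_mod]
  push_cast [Nat.cast_sub (Nat.le_of_lt (Fin.is_lt (1 : Fin m)))]
  rw [show ((((1:Fin m).val : ℕ)) : ZMod m) = 1 by
    obtain ⟨n, rfl⟩ : ∃ n, m = n + 1 := ⟨m - 1, by have := NeZero.pos m; omega⟩
    rw [Fin.val_one', ZMod.natCast_mod]; push_cast; rfl]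
  rw [ZMod.natCast_self]
  ring

lemma shiftState_forward {F : Type*} [Field F] (m : ℕ) [NeZero m] (c : ℕ → F) :
    ∀ k (j : Fin m), shiftState m c k j =
      ∑ i ∈ (Finset.Icc 1 k).filter
          (fun i : ℕ => ((i : ZMod m)) = (k : ZMod m) - (j.val : ZMod m)), c i := by
  intro k
  induction k with
  | zero => intro j; simp [shiftState]
  | succ k ih =>
    intro j
    have hr : ((k : ZMod m) - (((j - 1 : Fin m).val : ℕ) : ZMod m))
        = ((k + 1 : ℕ) : ZMod m) - (j.val : ZMod m) := by
      rw [fin_sub_one_cast]; push_cast; ring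
    have hsplit : (Finset.Icc 1 (k+1)).filter
          (fun i : ℕ => ((i : ZMod m)) = ((k+1 : ℕ) : ZMod m) - (j.val : ZMod m))
        = if ((k+1 : ℕ) : ZMod m) = ((k+1 : ℕ) : ZMod m) - (j.val : ZMod m) then
            insert (k+1) ((Finset.Icc 1 k).filter
              (fun i : ℕ => ((i : ZMod m)) = ((k+1 : ℕ) : ZMod m) - (j.val : ZMod m)))
          else (Finset.Icc 1 k).filter
              (fun i : ℕ => ((i : ZMod m)) = ((k+1 : ℕ) : ZMod m) - (j.val : ZMod m)) := by
      rw [show Finset.Icc 1 (k+1) = insert (k+1) (Finset.Icc 1 k) by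
        ext x; simp [Finset.mem_insert]; omega]
      rw [Finset.filter_insert]
    have hj0 : (((k+1 : ℕ) : ZMod m) = ((k+1 : ℕ) : ZMod m) - (j.val : ZMod m)) ↔ j = 0 := by
      constructor
      · intro h
        have h2 : ((j.val : ℕ) : ZMod m) = 0 := by linear_combination h
        rw [ZMod.natCast_eq_zero_iff] at h2
        have h3 := Nat.eq_zero_of_dvd_of_lt h2 j.isLt
        exact Fin.ext (by simp [h3])
      · intro h; subst h; simp
    by_cases hj : j = 0
    · subst hj
      rw [show shiftState m c (k+1) (0 : Fin m) = c (k+1) + shiftState m c k (0 - 1) by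
        simp [shiftState]]
      rw [ih, hr, hsplit, if_pos (hj0.mpr rfl)]
      rw [Finset.sum_insert (by simp)]
    · rw [show shiftState m c (k+1) j = shiftState m c k (j - 1) by
        simp [shiftState, hj]]
      rw [ih, hr, hsplit, if_neg (fun h => hj (hj0.mp h))]

/-- Lemma 2: under the tail-biting termination condition (every residue
class sum of the inputs `c₁, …, c_N` vanishes), the forward state at time `k ≤ N`
coincides with the state computed by the backward encoder from the remaining inputs:
`S k j = − Σ_{k < i ≤ N, i ≡ k − j (mod m)} c i`. -/
theorem shiftState_eq_neg_backward_sum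
    {F : Type*} [Field F] (m : ℕ) [NeZero m] (N : ℕ) (c : ℕ → F)
    (hterm : ∀ r : ZMod m,
      ∑ i ∈ (Finset.Icc 1 N).filter (fun i : ℕ => ((i : ZMod m)) = r), c i = 0) :
    ∀ k ≤ N, ∀ j : Fin m,
      shiftState m c k j =
        - ∑ i ∈ (Finset.Icc (k + 1) N).filter
            (fun i : ℕ => ((i : ZMod m)) = (k : ZMod m) - (j.val : ZMod m)), c i := by
  intro k hk j
  set p : ℕ → Prop := fun i : ℕ => ((i : ZMod m)) = (k : ZMod m) - (j.val : ZMod m) with hp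
  have hdisj : Disjoint ((Finset.Icc 1 k).filter p) ((Finset.Icc (k+1) N).filter p) := by
    rw [Finset.disjoint_left]
    intro a ha hb
    simp only [Finset.mem_filter, Finset.mem_Icc] at ha hb
    omega
  have hunion : (Finset.Icc 1 k).filter p ∪ (Finset.Icc (k+1) N).filter p
      = (Finset.Icc 1 N).filter p := by
    rw [← Finset.filter_union]
    congr 1
    ext x; simp [Finset.mem_union]; omega
  have h0 := hterm ((k : ZMod m) - (j.val : ZMod m))
  rw [← hunion, Finset.sum_union hdisj] at h0
  rw [shiftState_forward]
  linear_combination h0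
end

section
/- Let F be a finite field, let (Ω, P) be a probability space, let (c_i)_{i ≥ 1} be mutually independent F-valued random variables, let m ≥ 1, and let S be the circular shift-register state computed pathwise from the inputs. Then for every k ≥ 0, the m register contents S k 0, S k 1, …, S k (m−1) are mutually independent random variables; moreover the family (c_{k+1}, S k 0, …, S k (m−1)) is mutually independent. -/
open MeasureTheory ProbabilityTheory

/-- Monotonicity of mutual independence of σ-algebras. -/
lemma ProbabilityTheory.iIndep.mono' {Ω ι : Type*} {mΩ : MeasurableSpace Ω} {μ : Measure Ω}
    {m m' : ι → MeasurableSpace Ω} (h : iIndep m' μ) (hle : ∀ i, m i ≤ m' i) : iIndep m μ := by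
  rw [iIndep_iff] at h ⊢
  intro s f hf
  exact h s fun i hi => hle i _ (hf i hi)

/-- Grouping lemma: σ-algebras generated by disjoint blocks of a mutually independent family
are mutually independent. -/
lemma iIndep_biSup_of_disjoint {Ω ι ι' : Type*} {mΩ : MeasurableSpace Ω} {μ : Measure Ω}
    [IsProbabilityMeasure μ] {m : ι → MeasurableSpace Ω}
    (h_le : ∀ i, m i ≤ mΩ) (h : iIndep m μ)
    {S : ι' → Set ι} (hS : ∀ j j', j ≠ j' → Disjoint (S j) (S j')) :
    iIndep (fun j => ⨆ i ∈ S j, m i) μ := by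
  classical
  refine iIndepSets.iIndep (fun j => iSup₂_le fun i _ => h_le i)
    (fun j => piiUnionInter (fun i => {s | MeasurableSet[m i] s}) (S j))
    (fun j => isPiSystem_piiUnionInter _
      (fun i => @MeasurableSpace.isPiSystem_measurableSet _ (m i)) _)
    (fun j => (generateFrom_piiUnionInter_measurableSet m (S j)).symm) ?_
  rw [iIndepSets_iff]
  intro s f hf
  choose! t htS g hg hfeq using hf
  have htdisj : ∀ j ∈ s, ∀ j' ∈ s, j ≠ j' → Disjoint (t j) (t j') := by
    intro j hj j' hj' hne
    have := hS j j' hne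
    rw [Finset.disjoint_left]
    intro a ha ha'
    exact (this.le_bot ⟨htS j hj ha, htS j' hj' ha'⟩)
  set G : ι → Set Ω := fun i => ⋂ j ∈ s.filter (fun j => i ∈ t j), g j i with hG
  have hfilter : ∀ j ∈ s, ∀ i ∈ t j, s.filter (fun j' => i ∈ t j') = {j} := by
    intro j hj i hi
    ext j'
    simp only [Finset.mem_filter, Finset.mem_singleton]
    constructor
    · rintro ⟨hj', hij'⟩
      by_contra hne
      exact Finset.disjoint_left.mp (htdisj j' hj' j hj hne) hij' hi
    · rintro rfl; exact ⟨hj, hi⟩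
  have hGeq : ∀ j ∈ s, ∀ i ∈ t j, G i = g j i := by
    intro j hj i hi
    rw [hG]
    simp only
    rw [hfilter j hj i hi]
    simp
  set u := s.biUnion t with hu
  have hGmeas : ∀ i ∈ u, MeasurableSet[m i] (G i) := by
    intro i hi
    rw [hu, Finset.mem_biUnion] at hi
    obtain ⟨j, hj, hij⟩ := hi
    rw [hGeq j hj i hij]
    exact hg j hj i hij
  have hInter : (⋂ j ∈ s, f j) = ⋂ i ∈ u, G i := by
    ext ω
    simp only [Set.mem_iInter, hu, Finset.mem_biUnion]
    constructor
    · intro hω i hi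
      rw [hG]
      simp only [Set.mem_iInter, Finset.mem_filter]
      rintro j ⟨hj, hij⟩
      have := hω j hj
      rw [hfeq j hj] at this
      simp only [Set.mem_iInter] at this
      exact this i hij
    · intro hω j hj
      rw [hfeq j hj]
      simp only [Set.mem_iInter]
      intro i hi
      have := hω i ⟨j, hj, hi⟩
      rw [hGeq j hj i hi] at this
      exact this
  rw [hInter, h.meas_biInter hGmeas, hu,
    Finset.prod_biUnion (fun j hj j' hj' hne => htdisj j hj j' hj' hne)]
  refine Finset.prod_congr rfl fun j hj => ?_
  rw [hfeq j hj, h.meas_biInter (fun i hi => hg j hj i hi)]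
  exact (Finset.prod_congr rfl fun i hi => by rw [hGeq j hj i hi]).symm

/-- Sums over pairwise disjoint blocks of independent random variables are independent. -/
lemma iIndepFun_sum_blocks {Ω : Type*} [MeasureSpace Ω] [IsProbabilityMeasure (ℙ : Measure Ω)]
    {F : Type*} [AddCommMonoid F] [Fintype F] [MeasurableSpace F] [MeasurableSingletonClass F]
    {ι' : Type*} (c : ℕ → Ω → F) (hc : ∀ i, Measurable (c i))
    (hindep : iIndepFun
      (fun i : ℕ => c (i + 1)) ℙ)
    (s : ι' → Finset ℕ) (hdisj : ∀ j j', j ≠ j' → Disjoint (s j) (s j')) :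
    iIndepFun
      (fun (j : ι') (ω : Ω) => ∑ i ∈ s j, c (i + 1) ω) ℙ := by
  rw [iIndepFun_iff_iIndep]
  have hS : ∀ j j' : ι', j ≠ j' → Disjoint ((s j : Set ℕ)) ((s j' : Set ℕ)) := by
    intro j j' h
    exact Finset.disjoint_coe.mpr (hdisj j j' h)
  have big := iIndep_biSup_of_disjoint
    (m := fun i : ℕ => MeasurableSpace.comap (c (i + 1)) inferInstance)
    (fun i => (hc (i + 1)).comap_le) hindep.iIndep hS
  refine big.mono' fun j => ?_
  rw [← measurable_iff_comap_le]
  refine Finset.measurable_sum (s j) fun i hi => ?_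
  have h1 : @Measurable Ω F (MeasurableSpace.comap (c (i + 1)) inferInstance) _ (c (i + 1)) :=
    measurable_iff_comap_le.mpr le_rfl
  exact h1.mono (le_iSup₂ (f := fun (i : ℕ) (_ : i ∈ (s j : Set ℕ)) =>
      MeasurableSpace.comap (c (i + 1)) inferInstance) i hi) le_rfl

lemma fin_sub_one_key {m : ℕ} [NeZero m] (j : Fin m) :
    ((j - 1 : Fin m)).val + 1 ≡ j.val [MOD m] := by
  have h : ((j - 1 : Fin m) + 1) = j := sub_add_cancel j 1
  have h2 : ((j - 1 : Fin m).val + (1 : Fin m).val) % m = j.val := by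
    rw [← Fin.val_add, h]
  have h3 : (1 : Fin m).val = 1 % m := Fin.val_one' m
  calc ((j - 1 : Fin m).val + 1) % m
      = ((j - 1 : Fin m).val % m + 1 % m) % m := by rw [Nat.add_mod]
    _ = ((j - 1 : Fin m).val + (1 : Fin m).val) % m := by
        rw [Nat.mod_eq_of_lt (j - 1 : Fin m).is_lt, h3]
    _ = j.val := h2
    _ = j.val % m := (Nat.mod_eq_of_lt j.is_lt).symm

lemma cond_iff (m : ℕ) [NeZero m] (j : Fin m) (a k : ℕ) :
    a + (j - 1 : Fin m).val ≡ k [MOD m] ↔ a + j.val ≡ k + 1 [MOD m] := by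
  have h1 : ((j - 1 : Fin m)).val + 1 ≡ j.val [MOD m] := fin_sub_one_key j
  constructor
  · intro h
    calc a + j.val ≡ a + ((j - 1 : Fin m).val + 1) [MOD m] := (Nat.ModEq.add_left a h1).symm
      _ = a + (j - 1 : Fin m).val + 1 := by ring
      _ ≡ k + 1 [MOD m] := h.add_right 1
  · intro h
    refine Nat.ModEq.add_right_cancel' 1 ?_
    calc a + (j - 1 : Fin m).val + 1 = a + ((j - 1 : Fin m).val + 1) := by ring
      _ ≡ a + j.val [MOD m] := Nat.ModEq.add_left a h1
      _ ≡ k + 1 [MOD m] := h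

/-- The register `S k j` is the sum of the inputs over the residue class
`i ≡ k - j (mod m)`, `1 ≤ i ≤ k`. -/
lemma shiftState_eq_sum {F : Type*} [Field F] (m : ℕ) [NeZero m] (c : ℕ → F) (k : ℕ)
    (j : Fin m) :
    shiftState m c k j
      = ∑ i ∈ (Finset.range k).filter (fun i => (i + 1 + j.val) % m = k % m), c (i + 1) := by
  induction k generalizing j with
  | zero =>
    simp only [shiftState, Finset.range_zero]
    exact (Finset.sum_eq_zero (fun i hi => by have := (Finset.mem_filter.mp hi).1; simp at this)).symm
  | succ k ih =>
    have hset : ∀ j : Fin m,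
        (Finset.range k).filter (fun i => (i + 1 + (j - 1 : Fin m).val) % m = k % m)
          = (Finset.range k).filter (fun i => (i + 1 + j.val) % m = (k + 1) % m) := by
      intro j
      refine Finset.filter_congr fun i _ => ?_
      exact cond_iff m j (i + 1) k
    rw [shiftState]
    by_cases hj : j = 0
    · subst hj
      rw [if_pos rfl, ih, hset 0]
      rw [Finset.range_add_one, Finset.filter_insert, if_pos (by simp), Finset.sum_insert (by simp)]
    · rw [if_neg hj, ih, hset j]
      rw [Finset.range_add_one, Finset.filter_insert, if_neg ?_]
      intro hcon
      have : (k + 1 + j.val) % m = (k + 1) % m := hcon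
      have h0 : k + 1 + j.val ≡ k + 1 + 0 [MOD m] := by
        exact this
      have hdvd : j.val % m = 0 := by
        have h1 := Nat.ModEq.add_left_cancel' (k + 1) h0
        simpa [Nat.ModEq] using h1
      have hlt : j.val < m := j.is_lt
      rw [Nat.mod_eq_of_lt hlt] at hdvd
      exact hj (Fin.ext hdvd)

/-- for mutually independent inputs `(c_i)_{i ≥ 1}`, at every time `k` the
`m` register contents `S k 0, …, S k (m−1)` are mutually independent; moreover the family
`(c_{k+1}, S k 0, …, S k (m−1))` is mutually independent. -/
theorem registers_iIndepFun
    {Ω : Type*} [MeasureSpace Ω] [IsProbabilityMeasure (ℙ : Measure Ω)]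
    {F : Type*} [Field F] [Fintype F]
    [MeasurableSpace F] [MeasurableSingletonClass F]
    (m : ℕ) [NeZero m] (c : ℕ → Ω → F) (hc : ∀ i, Measurable (c i))
    (hindep : iIndepFun
      (fun i : ℕ => c (i + 1)) ℙ)
    (k : ℕ) :
    iIndepFun
        (fun (j : Fin m) (ω : Ω) => shiftState m (fun i => c i ω) k j) ℙ ∧
      iIndepFun
        (fun (o : Option (Fin m)) =>
          o.elim (c (k + 1))
            (fun (j : Fin m) (ω : Ω) => shiftState m (fun i => c i ω) k j)) ℙ := by
  classical
  set s₁ : Fin m → Finset ℕ :=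
    fun j => (Finset.range k).filter (fun i => (i + 1 + j.val) % m = k % m) with hs₁def
  have hdisj₁ : ∀ j j' : Fin m, j ≠ j' → Disjoint (s₁ j) (s₁ j') := by
    intro j j' hne
    rw [Finset.disjoint_left]
    intro i hi hi'
    simp only [hs₁def, Finset.mem_filter] at hi hi'
    have h1 : i + 1 + j.val ≡ i + 1 + j'.val [MOD m] := hi.2.trans hi'.2.symm
    have h2 := Nat.ModEq.add_left_cancel' (i + 1) h1
    have h3 : j.val % m = j'.val % m := h2
    rw [Nat.mod_eq_of_lt j.is_lt, Nat.mod_eq_of_lt j'.is_lt] at h3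
    exact hne (Fin.ext h3)
  have hrw₁ : (fun (j : Fin m) (ω : Ω) => shiftState m (fun i => c i ω) k j)
      = fun j ω => ∑ i ∈ s₁ j, c (i + 1) ω := by
    funext j ω
    rw [shiftState_eq_sum]
  set s₂ : Option (Fin m) → Finset ℕ := fun o => o.elim {k} s₁ with hs₂def
  have hk_not : ∀ j : Fin m, k ∉ s₁ j := by
    intro j hkj
    simp only [hs₁def, Finset.mem_filter, Finset.mem_range] at hkj
    exact lt_irrefl k hkj.1
  have hdisj₂ : ∀ o o' : Option (Fin m), o ≠ o' → Disjoint (s₂ o) (s₂ o') := by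
    intro o o' hne
    match o, o' with
    | none, none => exact absurd rfl hne
    | none, some j => simpa [hs₂def] using Finset.disjoint_singleton_left.mpr (hk_not j)
    | some j, none => simpa [hs₂def] using Finset.disjoint_singleton_right.mpr (hk_not j)
    | some j, some j' =>
      exact hdisj₁ j j' (fun h => hne (by rw [h]))
  have hrw₂ : (fun (o : Option (Fin m)) =>
        o.elim (c (k + 1)) (fun (j : Fin m) (ω : Ω) => shiftState m (fun i => c i ω) k j))
      = fun o ω => ∑ i ∈ s₂ o, c (i + 1) ω := by
    funext o ω
    match o with
    | none => simp [hs₂def]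
    | some j =>
      simp only [Option.elim, hs₂def]
      rw [shiftState_eq_sum]
  constructor
  · rw [hrw₁]
    exact iIndepFun_sum_blocks c hc hindep s₁ hdisj₁
  · rw [hrw₂]
    exact iIndepFun_sum_blocks c hc hindep s₂ hdisj₂
end
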